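/- For every σ ∈ R and every ordinal α, σ ∈ H_0(ψ_σ α). -/

import Mathlib

open Ordinal Set

noncomputable section

/-- A cardinal is weakly inaccessible: uncountable, regular, and a limit cardinal. -/
def WeaklyInaccessible (c : Cardinal) : Prop :=
  Cardinal.aleph0 < c ∧ c.IsRegular ∧ ∀ x < c, Order.succ x < c

/-- `I` is (the initial ordinal of) the least weakly inaccessible cardinal. -/
def I : Ordinal := (sInf {c : Cardinal | WeaklyInaccessible c}).ord

/-- `Om α` is `Ω_α`: `0` for `α = 0` and the initial ordinal of `ℵ_α` otherwise. -/
def Om (α : Ordinal) : Ordinal := if α = 0 then 0 else (Cardinal.aleph α).ord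

/-- `R = {Ω_{μ+1} : μ < I} ∪ {I}`. -/
def R : Set Ordinal := {o | (∃ μ < I, o = Om (μ + 1)) ∨ o = I}

/-- Given the family of hulls at earlier stages, the collapse `ψ_σ`. -/
def psiOf (F : Set Ordinal → Set Ordinal) (σ : Ordinal) : Ordinal :=
  sInf ({β | β < σ ∧ σ ∈ F (Set.Iio β) ∧ F (Set.Iio β) ∩ Set.Iio σ ⊆ Set.Iio β} ∪ {σ})

instance : WellFoundedRelation Ordinal := ⟨(· < ·), Ordinal.lt_wf⟩

/-- `H α X` is the least set of ordinals containing `X ∪ {0, I}` and closed under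
ordinal addition, `β ↦ ω^β`, `β ↦ Ω_β`, and `(σ, β) ↦ ψ_σ β` for `σ ∈ R` and `β < α`. -/
def H (α : Ordinal) (X : Set Ordinal) : Set Ordinal :=
  ⋂₀ {Y : Set Ordinal | X ∪ {0, I} ⊆ Y ∧
      (∀ γ ∈ Y, ∀ δ ∈ Y, γ + δ ∈ Y) ∧
      (∀ γ ∈ Y, Ordinal.omega0 ^ γ ∈ Y) ∧
      (∀ γ ∈ Y, Om γ ∈ Y) ∧
      (∀ σ ∈ R, ∀ β ∈ Y, β < α → σ ∈ Y → psiOf (H β) σ ∈ Y)}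
termination_by α
decreasing_by assumption

/-- The collapsing function `ψ_σ α`. -/
def psi (σ α : Ordinal) : Ordinal := psiOf (H α) σ

/-- The relation `δ₀ ≪ δ₁ {η}`. -/
def llr (η δ₀ δ₁ : Ordinal) : Prop :=
  δ₀ < δ₁ ∧ ∀ σ ∈ R, ∀ α : Ordinal,
    δ₁ ∈ H α (Set.Iio (psi σ α)) → η ∈ H α (Set.Iio (psi σ α)) → δ₀ ∈ H α (Set.Iio (psi σ α))

-- auxiliary lemmas

def Good (α : Ordinal) (X : Set Ordinal) (Y : Set Ordinal) : Prop :=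
  X ∪ {0, I} ⊆ Y ∧
      (∀ γ ∈ Y, ∀ δ ∈ Y, γ + δ ∈ Y) ∧
      (∀ γ ∈ Y, Ordinal.omega0 ^ γ ∈ Y) ∧
      (∀ γ ∈ Y, Om γ ∈ Y) ∧
      (∀ σ ∈ R, ∀ β ∈ Y, β < α → σ ∈ Y → psiOf (H β) σ ∈ Y)

lemma H_def (α : Ordinal) (X : Set Ordinal) : H α X = ⋂₀ {Y | Good α X Y} := by
  rw [H]; rfl

lemma good_H (α : Ordinal) (X : Set Ordinal) : Good α X (H α X) := by
  rw [H_def]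
  refine ⟨fun x hx => mem_sInter.2 fun Y hY => hY.1 hx,
    fun γ hγ δ hδ => mem_sInter.2 fun Y hY => hY.2.1 γ (hγ Y hY) δ (hδ Y hY),
    fun γ hγ => mem_sInter.2 fun Y hY => hY.2.2.1 γ (hγ Y hY),
    fun γ hγ => mem_sInter.2 fun Y hY => hY.2.2.2.1 γ (hγ Y hY),
    fun σ hσ β hβ hβα hσm => mem_sInter.2 fun Y hY =>
      hY.2.2.2.2 σ hσ β (hβ Y hY) hβα (hσm Y hY)⟩

lemma H_subset {α : Ordinal} {X Z : Set Ordinal} (h : Good α X Z) : H α X ⊆ Z := by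
  rw [H_def]; exact sInter_subset_of_mem h



lemma omega0_opow_lt_ord {c : Cardinal} (hc : Cardinal.aleph0 < c) (hreg : c.IsRegular) :
    ∀ γ < c.ord, Ordinal.omega0 ^ γ < c.ord := by
  intro γ
  induction γ using Ordinal.limitRecOn with
  | zero =>
    intro _
    rw [Ordinal.opow_zero, Cardinal.lt_ord, Ordinal.card_one]
    exact Cardinal.one_lt_aleph0.trans hc
  | add_one d IH =>
    intro h
    rw [Ordinal.opow_add_one, Cardinal.lt_ord, Ordinal.card_mul, Ordinal.card_omega0]
    exact Cardinal.mul_lt_of_lt hc.le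
      (Cardinal.lt_ord.1 (IH ((Order.le_succ d).trans_lt h))) hc
  | limit d hd IH =>
    intro h
    rw [Ordinal.opow_limit Ordinal.omega0_ne_zero hd]
    have := Cardinal.bsup_lt_ord_of_isRegular.{_, 0} hreg (Cardinal.lt_ord.1 h)
      (fun i hi => IH i hi (hi.trans h))
    rwa [← Ordinal.iSup_Iio_eq_bsup] at this

lemma succ_lt_om (μ : Ordinal) : μ + 1 < (Cardinal.aleph (μ + 1)).ord := by
  rw [Ordinal.add_one_eq_succ, Cardinal.ord_aleph]
  exact (Cardinal.isSuccLimit_omega _).succ_lt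
    ((Ordinal.le_omega_self μ).trans_lt (Ordinal.omega_strictMono (Order.lt_succ μ)))

lemma aleph_inj {a b : Ordinal} (h : (Cardinal.aleph a).ord = (Cardinal.aleph b).ord) : a = b := by
  have := Cardinal.ord_injective h
  exact le_antisymm (Cardinal.aleph_le_aleph.1 this.le) (Cardinal.aleph_le_aleph.1 this.ge)

lemma ord_aleph_pos (o : Ordinal) : 0 < (Cardinal.aleph o).ord := by
  rw [Cardinal.lt_ord, Ordinal.card_zero]
  exact (Cardinal.aleph_pos o)

lemma om_succ_eq (μ : Ordinal) : Om (μ + 1) = (Cardinal.aleph (μ + 1)).ord := by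
  rw [Om, if_neg]
  rw [Ordinal.add_one_eq_succ]
  exact Ordinal.succ_ne_zero μ

lemma key {μ β α : Ordinal} (hβσ : β < Om (μ + 1)) (hI : Om (μ + 1) ≠ I)
    (trap : H α (Set.Iio β) ∩ Set.Iio (Om (μ + 1)) ⊆ Set.Iio β)
    (hin : Om (μ + 1) ∈ H α (Set.Iio β)) : μ + 1 < β := by
  have hσa : Om (μ + 1) = (Cardinal.aleph (μ + 1)).ord := om_succ_eq μ
  have hμσ : μ + 1 < Om (μ + 1) := hσa ▸ succ_lt_om μ
  have hσ0 : Om (μ + 1) ≠ 0 := by rw [hσa]; exact (ord_aleph_pos _).ne'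
  have hreg : (Cardinal.aleph (μ + 1)).IsRegular := by
    rw [Ordinal.add_one_eq_succ]; exact Cardinal.isRegular_aleph_succ μ
  have haleph0 : Cardinal.aleph0 < Cardinal.aleph (μ + 1) := by
    rw [← Cardinal.aleph_zero]
    exact Cardinal.aleph_lt_aleph.2 (pos_iff_ne_zero.2 (by
      rw [Ordinal.add_one_eq_succ]; exact Ordinal.succ_ne_zero μ))
  have gH := good_H α (Set.Iio β)
  have hgood : Good α (Set.Iio β)
      (H α (Set.Iio β) ∩ {x | x = Om (μ + 1) → μ + 1 < β}) := by
    refine ⟨?_, ?_, ?_, ?_, ?_⟩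
    · rintro x (hx | hx)
      · exact ⟨gH.1 (Or.inl hx), fun hxσ => ((lt_asymm hβσ) (hxσ ▸ hx)).elim⟩
      · rcases hx with rfl | rfl
        · exact ⟨gH.1 (Or.inr (Or.inl rfl)), fun h0 => (hσ0 h0.symm).elim⟩
        · exact ⟨gH.1 (Or.inr (Or.inr rfl)), fun hIe => (hI hIe.symm).elim⟩
    · rintro γ ⟨hγY, hγZ⟩ δ ⟨hδY, hδZ⟩
      refine ⟨gH.2.1 γ hγY δ hδY, fun hsum => ?_⟩
      have hγle : γ ≤ Om (μ + 1) := hsum ▸ le_self_add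
      have hδle : δ ≤ Om (μ + 1) := hsum ▸ le_add_self
      rcases hγle.lt_or_eq with h1 | h1
      · rcases hδle.lt_or_eq with h2 | h2
        · rw [hσa] at h1 h2
          exact absurd hsum (by rw [hσa]; exact (Ordinal.isPrincipal_add_ord (Cardinal.aleph0_le_aleph _) h1 h2).ne)
        · exact hδZ h2
      · exact hγZ h1
    · rintro γ ⟨hγY, hγZ⟩
      refine ⟨gH.2.2.1 γ hγY, fun hpow => ?_⟩
      have hγle : γ ≤ Om (μ + 1) := hpow ▸ Ordinal.right_le_opow γ Ordinal.one_lt_omega0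
      rcases hγle.lt_or_eq with h1 | h1
      · rw [hσa] at h1
        exact absurd hpow (by rw [hσa]; exact (omega0_opow_lt_ord haleph0 hreg γ h1).ne)
      · exact hγZ h1
    · rintro γ ⟨hγY, hγZ⟩
      refine ⟨gH.2.2.2.1 γ hγY, fun hOm => ?_⟩
      rcases eq_or_ne γ 0 with h0 | h0
      · rw [h0, Om, if_pos rfl] at hOm
        exact (hσ0 hOm.symm).elim
      · have hγeq : γ = μ + 1 := by
          rw [Om, if_neg h0, hσa] at hOm
          exact aleph_inj hOm
        have hmem : γ ∈ Set.Iio β := trap ⟨hγY, Set.mem_Iio.2 (by rw [hγeq]; exact hμσ)⟩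
        rw [hγeq] at hmem
        exact hmem
    · rintro τ hτR δ ⟨hδY, _⟩ hδα ⟨hτY, hτZ⟩
      refine ⟨gH.2.2.2.2 τ hτR δ hδY hδα hτY, fun hψ => ?_⟩
      have hne : ({β' | β' < τ ∧ τ ∈ H δ (Set.Iio β') ∧
          H δ (Set.Iio β') ∩ Set.Iio τ ⊆ Set.Iio β'} ∪ {τ}).Nonempty := ⟨τ, Or.inr rfl⟩
      have hmem : psiOf (H δ) τ ∈ ({β' | β' < τ ∧ τ ∈ H δ (Set.Iio β') ∧
          H δ (Set.Iio β') ∩ Set.Iio τ ⊆ Set.Iio β'} ∪ {τ}) := csInf_mem hne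
      rw [hψ] at hmem
      rcases hmem with ⟨hστ, _, hsub⟩ | hτeq
      · have gHσ := good_H δ (Set.Iio (Om (μ + 1)))
        have hσmem : Om (μ + 1) ∈ H δ (Set.Iio (Om (μ + 1))) :=
          gHσ.2.2.2.1 (μ + 1) (gHσ.1 (Or.inl (Set.mem_Iio.2 hμσ)))
        exact (lt_irrefl _ (Set.mem_Iio.1 (hsub ⟨hσmem, Set.mem_Iio.2 hστ⟩))).elim
      · exact hτZ ((Set.mem_singleton_iff.1 hτeq).symm)
  exact (H_subset hgood hin).2 rfl

theorem stmt3 (hex : ∃ c : Cardinal, WeaklyInaccessible c) :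
    ∀ σ ∈ R, ∀ α : Ordinal, σ ∈ H 0 (Set.Iio (psi σ α)) := by
  rintro σ (⟨μ, hμI, rfl⟩ | rfl) α
  · have hσa : Om (μ + 1) = (Cardinal.aleph (μ + 1)).ord := om_succ_eq μ
    have hμσ : μ + 1 < Om (μ + 1) := hσa ▸ succ_lt_om μ
    have hI : Om (μ + 1) ≠ I := by
      intro h
      by_cases hne2 : {c : Cardinal | WeaklyInaccessible c}.Nonempty
      · have hc : WeaklyInaccessible (sInf {c : Cardinal | WeaklyInaccessible c}) :=
          csInf_mem hne2
        have hceq : Cardinal.aleph (μ + 1) = sInf {c : Cardinal | WeaklyInaccessible c} :=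
          Cardinal.ord_injective (by rw [← hσa, h, I])
        have h1 : Cardinal.aleph μ < sInf {c : Cardinal | WeaklyInaccessible c} := by
          rw [← hceq]
          exact Cardinal.aleph_lt_aleph.2 (by rw [Ordinal.add_one_eq_succ]; exact Order.lt_succ μ)
        have h2 := hc.2.2 (Cardinal.aleph μ) h1
        rw [← hceq, Ordinal.add_one_eq_succ, Cardinal.aleph_succ] at h2
        exact absurd h2 (lt_irrefl _)
      · rw [I, Set.not_nonempty_iff_eq_empty.1 hne2, Cardinal.sInf_empty,
          Cardinal.ord_zero] at h
        exact (ord_aleph_pos (μ + 1)).ne' (by rw [← hσa]; exact h)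
    have hne : ({β | β < Om (μ + 1) ∧ Om (μ + 1) ∈ H α (Set.Iio β) ∧
        H α (Set.Iio β) ∩ Set.Iio (Om (μ + 1)) ⊆ Set.Iio β} ∪ {Om (μ + 1)}).Nonempty :=
      ⟨Om (μ + 1), Or.inr rfl⟩
    have hmem : psi (Om (μ + 1)) α ∈ ({β | β < Om (μ + 1) ∧ Om (μ + 1) ∈ H α (Set.Iio β) ∧
        H α (Set.Iio β) ∩ Set.Iio (Om (μ + 1)) ⊆ Set.Iio β} ∪ {Om (μ + 1)}) := csInf_mem hne
    have gH0 := good_H 0 (Set.Iio (psi (Om (μ + 1)) α))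
    rcases hmem with ⟨hlt, hin, trap⟩ | heq
    · have hβ : μ + 1 < psi (Om (μ + 1)) α := key hlt hI trap hin
      exact gH0.2.2.2.1 (μ + 1) (gH0.1 (Or.inl (Set.mem_Iio.2 hβ)))
    · have hβ : μ + 1 < psi (Om (μ + 1)) α := by
        rw [Set.mem_singleton_iff.1 heq]; exact hμσ
      exact gH0.2.2.2.1 (μ + 1) (gH0.1 (Or.inl (Set.mem_Iio.2 hβ)))
  · exact (good_H 0 _).1 (Or.inr (Or.inr rfl))

end
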